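/- If a nonempty finite digraph D has a valid DAG-depth decomposition (P, org) of depth k, then ddp(D) ≤ k. -/

import Mathlib

open scoped Classical

noncomputable section

/-- A finite directed graph: a finite vertex set together with an adjacency
relation whose edges join vertices of the graph. -/
structure FinDigraph (α : Type) where
  verts : Finset α
  Adj : α → α → Prop
  adj_mem : ∀ u v, Adj u v → u ∈ verts ∧ v ∈ verts

namespace FinDigraph

variable {α β : Type}

/-- The out-neighbourhood `N⁺_D(v)`. -/
def outNbhd (D : FinDigraph α) (v : α) : Set α := {u | D.Adj v u}

/-- The set of vertices reachable from `s` by a (possibly trivial) directed path. -/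
def reachSet (D : FinDigraph α) (s : α) : Finset α :=
  D.verts.filter fun v => Relation.ReflTransGen D.Adj s v

/-- A reachable fragment: an inclusion-maximal set among the reachable sets. -/
def IsFragment (D : FinDigraph α) (R : Finset α) : Prop :=
  (∃ s ∈ D.verts, R = D.reachSet s) ∧
  ∀ s ∈ D.verts, R ⊆ D.reachSet s → R = D.reachSet s

/-- The collection of all reachable fragments of `D`. -/
def fragments (D : FinDigraph α) : Finset (Finset α) :=
  D.verts.powerset.filter fun R => D.IsFragment R

/-- The induced subdigraph `D[S]`. -/
def induce (D : FinDigraph α) (S : Finset α) : FinDigraph α where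
  verts := D.verts ∩ S
  Adj u v := D.Adj u v ∧ u ∈ S ∧ v ∈ S
  adj_mem := fun u v h => ⟨Finset.mem_inter.mpr ⟨(D.adj_mem u v h.1).1, h.2.1⟩,
    Finset.mem_inter.mpr ⟨(D.adj_mem u v h.1).2, h.2.2⟩⟩

/-- Deletion of a vertex: `D − v = D[V(D) ∖ {v}]`. -/
def deleteVert (D : FinDigraph α) (v : α) : FinDigraph α :=
  D.induce (D.verts.erase v)

/-- Fuel-based helper for DAG-depth; the fuel `|V(D)|` always suffices since each
recursive call strictly decreases the number of vertices. -/
def ddpAux : ℕ → FinDigraph α → ℕ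
  | 0, _ => 0
  | n+1, D =>
    if hcard : D.verts.card ≤ 1 then 1
    else if D.fragments.card = 1 then
      1 + D.verts.inf' (Finset.card_pos.mp (by omega)) fun v => ddpAux n (D.deleteVert v)
    else
      D.fragments.sup fun R => ddpAux n (D.induce R)

/-- The DAG-depth of a digraph. -/
def ddp (D : FinDigraph α) : ℕ := ddpAux D.verts.card D

/-- A DAG: a (finite) digraph with no directed cycles. -/
def IsDag (P : FinDigraph α) : Prop := ∀ v, ¬ Relation.TransGen P.Adj v v

/-- A root of a DAG: a vertex of indegree zero. -/
def IsRoot (P : FinDigraph α) (r : α) : Prop := r ∈ P.verts ∧ ∀ u, ¬ P.Adj u r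

/-- `y` is a descendant of `x`: there is a (possibly trivial) directed path from `x` to `y`. -/
def Desc (P : FinDigraph α) (x y : α) : Prop := Relation.ReflTransGen P.Adj x y

/-- `l` is a directed path in `P` starting at a root of `P` and ending at `v`. -/
def IsRootPath (P : FinDigraph α) (l : List α) (v : α) : Prop :=
  l ≠ [] ∧ l.Chain' P.Adj ∧ (∀ x ∈ l, x ∈ P.verts) ∧
  (∃ r, l.head? = some r ∧ P.IsRoot r) ∧ l.getLast? = some v

/-- The depth of a DAG: the maximum number of vertices on a directed path. -/
def depth (P : FinDigraph α) : ℕ :=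
  sSup {n : ℕ | ∃ l : List α, l.Chain' P.Adj ∧ (∀ x ∈ l, x ∈ P.verts) ∧ l.length = n}

/-- The Neighbor cover condition for a DAG-depth decomposition `(P, org)` of `D`. -/
def NeighborCover (D : FinDigraph α) (P : FinDigraph β) (org : β → α) : Prop :=
  ∀ v' ∈ P.verts, ∀ u, D.Adj (org v') u →
    (∃ u' ∈ P.verts, org u' = u ∧ P.Desc v' u') ∨
    (∀ l, P.IsRootPath l v' → ∃ u' ∈ l, org u' = u)

/-- `(P, org)` is a valid DAG-depth decomposition of `D`: `P` is a DAG, `org` maps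
`V(P)` onto `V(D)`, and the Neighbor cover condition holds. -/
def IsValidDecomp (D : FinDigraph α) (P : FinDigraph β) (org : β → α) : Prop :=
  P.IsDag ∧ (∀ v' ∈ P.verts, org v' ∈ D.verts) ∧
  (∀ v ∈ D.verts, ∃ v' ∈ P.verts, org v' = v) ∧
  NeighborCover D P org

/-! ### Auxiliary lemmas for the main theorem -/

section Aux

variable {α β : Type}

lemma rtg_mem {P : FinDigraph β} {a b : β} (h : Relation.ReflTransGen P.Adj a b)
    (ha : a ∈ P.verts) : b ∈ P.verts := by
  induction h with
  | refl => exact ha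
  | tail _ h _ => exact (P.adj_mem _ _ h).2

lemma chain_transGen {R : β → β → Prop} :
    ∀ {l : List β} {a : β}, List.Chain R a l → ∀ b ∈ l, Relation.TransGen R a b := by
  intro l
  induction l with
  | nil => intro a _ b hb; simp at hb
  | cons c t ih =>
    intro a h b hb
    replace h : R a c ∧ List.Chain R c t := List.isChain_cons_cons.mp h
    rcases List.mem_cons.mp hb with rfl | hb
    · exact Relation.TransGen.single h.1
    · exact (Relation.TransGen.single h.1).trans (ih h.2 b hb)

lemma chain'_nodup {P : FinDigraph β} (hdag : P.IsDag) :
    ∀ {l : List β}, List.Chain' P.Adj l → l.Nodup := by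
  intro l
  induction l with
  | nil => simp
  | cons a t ih =>
    intro h
    have h1 : List.Chain P.Adj a t := h
    refine List.nodup_cons.mpr ⟨fun ha => hdag a (chain_transGen h1 a ha), ih h.tail⟩

/-- The set of chain lengths whose supremum is `depth`. -/
def depthSet (P : FinDigraph β) : Set ℕ :=
  {n : ℕ | ∃ l : List β, l.Chain' P.Adj ∧ (∀ x ∈ l, x ∈ P.verts) ∧ l.length = n}

lemma depth_eq_sSup (P : FinDigraph β) : P.depth = sSup (depthSet P) := rfl

lemma depthSet_zero (P : FinDigraph β) : 0 ∈ depthSet P :=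
  ⟨[], List.isChain_nil, by simp, rfl⟩

lemma depthSet_bddAbove {P : FinDigraph β} (hdag : P.IsDag) : BddAbove (depthSet P) := by
  refine ⟨P.verts.card, fun n hn => ?_⟩
  obtain ⟨l, hc, hm, rfl⟩ := hn
  have hnd : l.Nodup := chain'_nodup hdag hc
  calc l.length = l.toFinset.card := (List.toFinset_card_of_nodup hnd).symm
    _ ≤ P.verts.card := Finset.card_le_card (fun x hx => hm x (List.mem_toFinset.mp hx))

lemma le_depth {P : FinDigraph β} (hdag : P.IsDag) {n : ℕ} (h : n ∈ depthSet P) :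
    n ≤ P.depth :=
  le_csSup (depthSet_bddAbove hdag) h

lemma depth_le {P : FinDigraph β} {m : ℕ} (h : ∀ n ∈ depthSet P, n ≤ m) : P.depth ≤ m :=
  csSup_le ⟨0, depthSet_zero P⟩ h

lemma one_le_depth {P : FinDigraph β} (hdag : P.IsDag) {v : β} (hv : v ∈ P.verts) :
    1 ≤ P.depth :=
  le_depth hdag ⟨[v], List.isChain_singleton v, by simpa using hv, rfl⟩

/-- Turn a reflexive-transitive chain into an explicit list. -/
lemma rtg_toList {Rel : β → β → Prop} {a b : β} (h : Relation.ReflTransGen Rel a b) :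
    ∃ M : List β, M ≠ [] ∧ M.head? = some a ∧ M.getLast? = some b ∧ M.Chain' Rel ∧
      (∀ x ∈ M, Relation.ReflTransGen Rel a x) ∧
      (∀ x ∈ M, x = a ∨ ∃ y, Rel y x) ∧
      (∀ x ∈ M, x = b ∨ ∃ y, Rel x y) ∧
      (a = b ∨ 2 ≤ M.length) := by
  induction h using Relation.ReflTransGen.head_induction_on with
  | refl =>
    refine ⟨[b], by simp, rfl, rfl, List.isChain_singleton b, ?_, by simp, by simp,
      Or.inl rfl⟩
    intro x hx
    simp at hx
    subst hx
    exact Relation.ReflTransGen.refl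
  | @head a c hac hcb ih =>
    obtain ⟨M, hne, hhd, hlast, hch, hrtg, hsrc, htgt, _⟩ := ih
    obtain ⟨m, M', rfl⟩ : ∃ m M', M = m :: M' := by
      cases M with
      | nil => exact absurd rfl hne
      | cons m M' => exact ⟨m, M', rfl⟩
    have hmc : m = c := by simpa using hhd
    subst hmc
    refine ⟨a :: m :: M', by simp, rfl, ?_, ?_, ?_, ?_, ?_, ?_⟩
    · rw [List.getLast?_cons_cons]; exact hlast
    · exact List.isChain_cons_cons.mpr ⟨hac, hch⟩
    · intro x hx
      rcases List.mem_cons.mp hx with rfl | hx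
      · exact Relation.ReflTransGen.refl
      · exact Relation.ReflTransGen.head hac (hrtg x hx)
    · intro x hx
      rcases List.mem_cons.mp hx with rfl | hx
      · exact Or.inl rfl
      · rcases hsrc x hx with rfl | hy
        · exact Or.inr ⟨a, hac⟩
        · exact Or.inr hy
    · intro x hx
      rcases List.mem_cons.mp hx with rfl | hx
      · exact Or.inr ⟨m, hac⟩
      · exact htgt x hx
    · right
      have : (a :: m :: M').length = M'.length + 2 := by simp
      omega

/-- Glue two chains sharing an endpoint. -/
lemma chain_append {R : β → β → Prop} {M L : List β} {c : β}
    (hM : M.Chain' R) (hL : L.Chain' R) (h1 : M.getLast? = some c) (h2 : L.head? = some c) :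
    (M ++ L.tail).Chain' R ∧ (M ++ L.tail).head? = M.head? ∧
    (M ++ L.tail).getLast? = L.getLast? ∧
    (M ++ L.tail).length + 1 = M.length + L.length ∧
    ∀ x ∈ M ++ L.tail, x ∈ M ∨ x ∈ L := by
  have hMne : M ≠ [] := by rintro rfl; simp at h1
  obtain ⟨t, rfl⟩ : ∃ t, L = c :: t := by
    cases L with
    | nil => simp at h2
    | cons d t =>
      have hdc : d = c := by simpa using h2
      subst hdc
      exact ⟨t, rfl⟩
  have htail : (c :: t).tail = t := rfl
  refine ⟨?_, ?_, ?_, ?_, ?_⟩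
  · rw [htail]
    refine hM.append (hL.tail) ?_
    intro x hx y hy
    rw [h1] at hx
    simp only [Option.mem_def, Option.some.injEq] at hx
    subst hx
    cases t with
    | nil => simp at hy
    | cons d t' =>
      have : d = y := by simpa using hy
      subst this
      exact (List.isChain_cons_cons.mp hL).1
  · rw [htail]; exact List.head?_append_of_ne_nil M hMne
  · rw [htail]
    cases t with
    | nil => simpa using h1
    | cons d t' => rw [List.getLast?_append_of_ne_nil M (by simp), List.getLast?_cons_cons]
  · rw [htail]; simp; omega
  · intro x hx
    rcases List.mem_append.mp hx with hx | hx
    · exact Or.inl hx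
    · exact Or.inr (by rw [htail] at hx; exact List.mem_cons_of_mem _ hx)

/-! #### Fragments -/

lemma mem_reachSet {D : FinDigraph α} {s v : α} :
    v ∈ D.reachSet s ↔ v ∈ D.verts ∧ Relation.ReflTransGen D.Adj s v :=
  Finset.mem_filter

lemma self_mem_reachSet {D : FinDigraph α} {s : α} (hs : s ∈ D.verts) : s ∈ D.reachSet s :=
  mem_reachSet.mpr ⟨hs, Relation.ReflTransGen.refl⟩

lemma exists_fragment_mem {D : FinDigraph α} {v : α} (hv : v ∈ D.verts) :
    ∃ R ∈ D.fragments, v ∈ R := by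
  classical
  set F := (D.verts.image D.reachSet).filter (fun X => D.reachSet v ⊆ X) with hF
  have hvF : D.reachSet v ∈ F :=
    Finset.mem_filter.mpr ⟨Finset.mem_image_of_mem _ hv, le_refl _⟩
  obtain ⟨R, hRF, hmax⟩ := F.exists_max_image (fun X => X.card) ⟨_, hvF⟩
  obtain ⟨hRim, hRsub⟩ := Finset.mem_filter.mp hRF
  obtain ⟨t, htv, rfl⟩ := Finset.mem_image.mp hRim
  have hfrag : D.IsFragment (D.reachSet t) := by
    refine ⟨⟨t, htv, rfl⟩, fun s hs hsub => ?_⟩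
    have hsF : D.reachSet s ∈ F :=
      Finset.mem_filter.mpr ⟨Finset.mem_image_of_mem _ hs, hRsub.trans hsub⟩
    exact Finset.eq_of_subset_of_card_le hsub (hmax _ hsF)
  refine ⟨D.reachSet t, Finset.mem_filter.mpr
    ⟨Finset.mem_powerset.mpr (Finset.filter_subset _ _), hfrag⟩, hRsub (self_mem_reachSet hv)⟩

lemma single_fragment {D : FinDigraph α} (h1 : D.fragments.card = 1) :
    ∃ s ∈ D.verts, D.reachSet s = D.verts := by
  obtain ⟨R, hR⟩ := Finset.card_eq_one.mp h1
  have hRm : R ∈ D.fragments := hR ▸ Finset.mem_singleton_self R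
  obtain ⟨hRp, hfrag⟩ := Finset.mem_filter.mp hRm
  obtain ⟨⟨s, hs, rfl⟩, _⟩ := hfrag
  refine ⟨s, hs, subset_antisymm (Finset.mem_powerset.mp hRp) fun v hv => ?_⟩
  obtain ⟨R', hR', hvR'⟩ := exists_fragment_mem hv
  rw [hR, Finset.mem_singleton] at hR'
  exact hR' ▸ hvR'

lemma fragment_ne_verts {D : FinDigraph α} (hcard : D.fragments.card ≠ 1) {R : Finset α}
    (hR : R ∈ D.fragments) : R ≠ D.verts := by
  rintro rfl
  apply hcard
  obtain ⟨hp, ⟨s, hs, hRs⟩, _⟩ := Finset.mem_filter.mp hR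
  refine Finset.card_eq_one.mpr ⟨D.verts, Finset.eq_singleton_iff_unique_mem.mpr
    ⟨hR, fun R' hR' => ?_⟩⟩
  obtain ⟨hp', _, hmax'⟩ := Finset.mem_filter.mp hR'
  have hsub : R' ⊆ D.reachSet s := hRs ▸ Finset.mem_powerset.mp hp'
  rw [hmax' s hs hsub, ← hRs]

/-! #### Contraction of a decomposition DAG onto a subset of its vertices -/

/-- Contract `P` onto the vertex set `Q`: edges are `P`-paths whose internal
vertices avoid `Q`. -/
def contractTo (P : FinDigraph β) (Q : Finset β) : FinDigraph β where
  verts := Q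
  Adj u v := u ∈ Q ∧ v ∈ Q ∧
    ∃ w, Relation.ReflTransGen (fun a b => P.Adj a b ∧ b ∉ Q) u w ∧ P.Adj w v
  adj_mem := fun u v h => ⟨h.1, h.2.1⟩

lemma contract_adj_transGen {P : FinDigraph β} {Q : Finset β} {u v : β}
    (h : (P.contractTo Q).Adj u v) : Relation.TransGen P.Adj u v := by
  obtain ⟨_, _, w, hw, hadj⟩ := h
  exact Relation.TransGen.tail' (Relation.ReflTransGen.mono (fun a b hab => hab.1) _ _ hw) hadj

lemma contract_isDag {P : FinDigraph β} (hdag : P.IsDag) (Q : Finset β) :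
    (P.contractTo Q).IsDag := by
  intro v hv
  apply hdag v
  have h2 := Relation.TransGen.mono (fun a b h => contract_adj_transGen h) v v hv
  rwa [Relation.transGen_idem] at h2

lemma contract_desc {P : FinDigraph β} {Q : Finset β} {x y : β}
    (h : Relation.ReflTransGen P.Adj x y) (hx : x ∈ Q) (hy : y ∈ Q) :
    Relation.ReflTransGen (P.contractTo Q).Adj x y := by
  suffices H : ∃ z, z ∈ Q ∧ Relation.ReflTransGen (P.contractTo Q).Adj x z ∧
      Relation.ReflTransGen (fun a b => P.Adj a b ∧ b ∉ Q) z y by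
    obtain ⟨z, hzQ, h1, h2⟩ := H
    rcases h2.cases_tail with heq | ⟨c, _, hcy⟩
    · exact heq ▸ h1
    · exact absurd hy hcy.2
  clear hy
  induction h with
  | refl => exact ⟨x, hx, Relation.ReflTransGen.refl, Relation.ReflTransGen.refl⟩
  | @tail b c hxb hbc ih =>
    obtain ⟨z, hzQ, h1, h2⟩ := ih
    by_cases hcQ : c ∈ Q
    · exact ⟨c, hcQ, h1.tail ⟨hzQ, hcQ, _, h2, hbc⟩, Relation.ReflTransGen.refl⟩
    · exact ⟨z, hzQ, h1, h2.tail ⟨hbc, hcQ⟩⟩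

lemma contract_root_aux {P : FinDigraph β} {Q : Finset β} {r' : β} (hr'Q : r' ∈ Q) :
    ∀ {y}, Relation.ReflTransGen (fun a b => P.Adj a b ∧ a ∉ Q) y r' →
      ∀ {p}, p ∈ Q → Relation.ReflTransGen (fun a b => P.Adj a b ∧ b ∉ Q) p y → y ∉ Q →
      (P.contractTo Q).Adj p r' := by
  intro y h
  induction h using Relation.ReflTransGen.head_induction_on with
  | refl => intro p hp hpy hy; exact absurd hr'Q hy
  | @head y b hyb hbr ih =>
    intro p hpQ hpy hy
    rcases hbr.cases_head with heq | ⟨c, hbc, _⟩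
    · exact ⟨hpQ, hr'Q, y, hpy, heq ▸ hyb.1⟩
    · exact ih hpQ (hpy.tail ⟨hyb.1, hbc.2⟩) hbc.2

/-- Ancestors of a vertex; used as termination measure for walking back to a root. -/
def ancSet (P : FinDigraph β) (x : β) : Finset β :=
  P.verts.filter fun a => Relation.TransGen P.Adj a x

lemma ancSet_lt {P : FinDigraph β} (hdag : P.IsDag) {p x : β} (h : P.Adj p x) :
    ((ancSet P p).card < (ancSet P x).card) := by
  apply Finset.card_lt_card
  rw [Finset.ssubset_def]
  constructor
  · intro a ha
    obtain ⟨hav, hat⟩ := Finset.mem_filter.mp ha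
    exact Finset.mem_filter.mpr ⟨hav, hat.tail h⟩
  · intro hsub
    have hp : p ∈ ancSet P x :=
      Finset.mem_filter.mpr ⟨(P.adj_mem _ _ h).1, Relation.TransGen.single h⟩
    exact hdag p (Finset.mem_filter.mp (hsub hp)).2

lemma exists_root_desc {P : FinDigraph β} (hdag : P.IsDag) :
    ∀ (n : ℕ) {x : β}, (ancSet P x).card ≤ n → x ∈ P.verts →
      ∃ r, P.IsRoot r ∧ P.Desc r x := by
  intro n
  induction n with
  | zero =>
    intro x hx hxv
    refine ⟨x, ⟨hxv, fun u hu => ?_⟩, Relation.ReflTransGen.refl⟩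
    have hmem : u ∈ ancSet P x :=
      Finset.mem_filter.mpr ⟨(P.adj_mem _ _ hu).1, Relation.TransGen.single hu⟩
    simp [Finset.card_eq_zero.mp (Nat.le_zero.mp hx)] at hmem
  | succ n ih =>
    intro x hx hxv
    by_cases h : ∃ p, P.Adj p x
    · obtain ⟨p, hp⟩ := h
      obtain ⟨r, hr, hd⟩ :=
        ih (Nat.lt_succ_iff.mp (lt_of_lt_of_le (ancSet_lt hdag hp) hx)) (P.adj_mem _ _ hp).1
      exact ⟨r, hr, hd.tail hp⟩
    · exact ⟨x, ⟨hxv, fun u hu => h ⟨u, hu⟩⟩, Relation.ReflTransGen.refl⟩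

/-- Lift a root of a contraction back to a root path of the original DAG whose
vertices (except the endpoint) avoid `Q`. -/
lemma contract_root_path {P : FinDigraph β} (hdag : P.IsDag) {Q : Finset β}
    (hQ : Q ⊆ P.verts) {r' : β} (hroot : (P.contractTo Q).IsRoot r') :
    ∃ M : List β, M ≠ [] ∧ M.Chain' P.Adj ∧ (∀ x ∈ M, x ∈ P.verts) ∧
      (∃ rr, M.head? = some rr ∧ P.IsRoot rr) ∧ M.getLast? = some r' ∧
      (∀ x ∈ M, x = r' ∨ x ∉ Q) := by
  have hr'Q : r' ∈ Q := hroot.1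
  have rootBranch : ∀ y : β, y ∈ P.verts →
      Relation.ReflTransGen (fun a b => P.Adj a b ∧ a ∉ Q) y r' →
      (∀ u, ¬ P.Adj u y) →
      ∃ M : List β, M ≠ [] ∧ M.Chain' P.Adj ∧ (∀ x ∈ M, x ∈ P.verts) ∧
        (∃ rr, M.head? = some rr ∧ P.IsRoot rr) ∧ M.getLast? = some r' ∧
        (∀ x ∈ M, x = r' ∨ x ∉ Q) := by
    intro y hyv hpath hnoin
    obtain ⟨M, hne, hhd, hlast, hch, _, hsrc, htgt, _⟩ := rtg_toList hpath
    refine ⟨M, hne, hch.imp fun a b hab => hab.1, ?_, ⟨y, hhd, hyv, hnoin⟩, hlast, ?_⟩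
    · intro x hx
      rcases hsrc x hx with rfl | ⟨z, hz⟩
      · exact hyv
      · exact (P.adj_mem _ _ hz.1).2
    · intro x hx
      rcases htgt x hx with rfl | ⟨z, hz⟩
      · exact Or.inl rfl
      · exact Or.inr hz.2
  suffices H : ∀ (n : ℕ) (y : β), (ancSet P y).card ≤ n → y ∈ P.verts →
      Relation.ReflTransGen (fun a b => P.Adj a b ∧ a ∉ Q) y r' → (y = r' ∨ y ∉ Q) →
      ∃ M : List β, M ≠ [] ∧ M.Chain' P.Adj ∧ (∀ x ∈ M, x ∈ P.verts) ∧
        (∃ rr, M.head? = some rr ∧ P.IsRoot rr) ∧ M.getLast? = some r' ∧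
        (∀ x ∈ M, x = r' ∨ x ∉ Q) by
    exact H (ancSet P r').card r' le_rfl (hQ hr'Q) Relation.ReflTransGen.refl (Or.inl rfl)
  intro n
  induction n with
  | zero =>
    intro y hy hyv hpath hyc
    refine rootBranch y hyv hpath fun u hu => ?_
    have hmem : u ∈ ancSet P y :=
      Finset.mem_filter.mpr ⟨(P.adj_mem _ _ hu).1, Relation.TransGen.single hu⟩
    simp [Finset.card_eq_zero.mp (Nat.le_zero.mp hy)] at hmem
  | succ n ih =>
    intro y hy hyv hpath hyc
    by_cases h : ∃ p, P.Adj p y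
    · obtain ⟨p, hp⟩ := h
      by_cases hpQ : p ∈ Q
      · exfalso
        apply hroot.2 p
        rcases hyc with rfl | hyQ
        · exact ⟨hpQ, hr'Q, p, Relation.ReflTransGen.refl, hp⟩
        · exact contract_root_aux hr'Q hpath hpQ (Relation.ReflTransGen.single ⟨hp, hyQ⟩) hyQ
      · exact ih p (Nat.lt_succ_iff.mp (lt_of_lt_of_le (ancSet_lt hdag hp) hy))
          (P.adj_mem _ _ hp).1 (hpath.head ⟨hp, hpQ⟩) (Or.inr hpQ)
    · exact rootBranch y hyv hpath fun u hu => h ⟨u, hu⟩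

/-- Expand a chain of the contraction into a chain of `P`. -/
lemma contract_expand {P : FinDigraph β} {Q : Finset β} :
    ∀ {l : List β}, l.Chain' (P.contractTo Q).Adj → (∀ x ∈ l, x ∈ Q) → l ≠ [] →
    ∃ L : List β, L.Chain' P.Adj ∧ L.head? = l.head? ∧ L.getLast? = l.getLast? ∧
      l.length ≤ L.length ∧
      (∀ x ∈ L, x ∈ l ∨ (x ∉ Q ∧ ∃ y, P.Adj y x)) := by
  intro l
  induction l with
  | nil => intro _ _ h; exact absurd rfl h
  | cons a t ih =>
    intro hch hmem _
    cases t with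
    | nil => exact ⟨[a], List.isChain_singleton a, rfl, rfl, le_rfl, by simp⟩
    | cons b t' =>
      have hab : (P.contractTo Q).Adj a b := (List.isChain_cons_cons.mp hch).1
      obtain ⟨L₂, hL₂c, hL₂h, hL₂l, hL₂len, hL₂m⟩ := ih (List.isChain_cons_cons.mp hch).2
        (fun x hx => hmem x (List.mem_cons_of_mem _ hx)) (by simp)
      obtain ⟨haQ, hbQ, w, hw, hwb⟩ := hab
      obtain ⟨M, hMne, hMh, hMl, hMc, _, hMsrc, _, _⟩ := rtg_toList hw
      have hL₂ne : L₂ ≠ [] := by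
        intro h; rw [h] at hL₂h; simp at hL₂h
      refine ⟨M ++ L₂, ?_, ?_, ?_, ?_, ?_⟩
      · refine (hMc.imp fun a b hab => hab.1).append hL₂c ?_
        intro x hx y hy
        rw [hMl] at hx
        simp only [Option.mem_def, Option.some.injEq] at hx
        subst hx
        rw [hL₂h] at hy
        simp only [List.head?_cons, Option.mem_def, Option.some.injEq] at hy
        subst hy
        exact hwb
      · rw [List.head?_append_of_ne_nil M hMne, hMh]; rfl
      · rw [List.getLast?_append_of_ne_nil M hL₂ne, hL₂l, List.getLast?_cons_cons]
      · have h1 : 1 ≤ M.length := by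
          cases M with
          | nil => exact absurd rfl hMne
          | cons _ _ => simp
        have h2 : (b :: t').length ≤ L₂.length := hL₂len
        simp only [List.length_append, List.length_cons] at *
        omega
      · intro x hx
        rcases List.mem_append.mp hx with hx | hx
        · rcases hMsrc x hx with rfl | ⟨y, hy⟩
          · exact Or.inl List.mem_cons_self
          · exact Or.inr ⟨hy.2, y, hy.1⟩
        · rcases hL₂m x hx with hxl | hxr
          · exact Or.inl (List.mem_cons_of_mem _ hxl)
          · exact Or.inr hxr

lemma contract_depth_le {P : FinDigraph β} (hdag : P.IsDag) {Q : Finset β}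
    (hQ : Q ⊆ P.verts) : (P.contractTo Q).depth ≤ P.depth := by
  apply depth_le
  intro n hn
  obtain ⟨l, hc, hm, rfl⟩ := hn
  rcases eq_or_ne l [] with rfl | hne
  · simp
  obtain ⟨L, hLc, _, _, hlen, hLm⟩ := contract_expand hc hm hne
  refine hlen.trans (le_depth hdag ⟨L, hLc, fun x hx => ?_, rfl⟩)
  rcases hLm x hx with h | h
  · exact hQ (hm x h)
  · exact (P.adj_mem _ _ h.2.choose_spec).2

/-- Contracting a valid decomposition onto the preimage of `S` yields a valid
decomposition of `D[S]`. -/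
lemma contract_valid {D : FinDigraph α} {P : FinDigraph β} {org : β → α}
    (h : IsValidDecomp D P org) (S : Finset α) :
    IsValidDecomp (D.induce S) (P.contractTo (P.verts.filter fun v' => org v' ∈ S)) org := by
  obtain ⟨hdag, hmem, hsurj, hcov⟩ := h
  set Q := P.verts.filter fun v' => org v' ∈ S with hQdef
  have hQsub : Q ⊆ P.verts := Finset.filter_subset _ _
  refine ⟨contract_isDag hdag Q, ?_, ?_, ?_⟩
  · intro v' hv'
    obtain ⟨hv'P, hv'S⟩ := Finset.mem_filter.mp hv'
    exact Finset.mem_inter.mpr ⟨hmem v' hv'P, hv'S⟩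
  · intro v hv
    obtain ⟨hvD, hvS⟩ := Finset.mem_inter.mp hv
    obtain ⟨v', hv'P, rfl⟩ := hsurj v hvD
    exact ⟨v', Finset.mem_filter.mpr ⟨hv'P, hvS⟩, rfl⟩
  · intro v' hv' u hadj
    obtain ⟨hDadj, _, huS⟩ := hadj
    obtain ⟨hv'P, _⟩ := Finset.mem_filter.mp hv'
    rcases hcov v' hv'P u hDadj with ⟨u', hu'P, horg, hdesc⟩ | hall
    · have hu'Q : u' ∈ Q := Finset.mem_filter.mpr ⟨hu'P, horg ▸ huS⟩
      exact Or.inl ⟨u', hu'Q, horg, contract_desc hdesc hv' hu'Q⟩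
    · right
      intro l hl
      obtain ⟨hlne, hlch, hlmem, ⟨rr0, hhead, hroot⟩, hlast⟩ := hl
      obtain ⟨L, hLc, hLh, hLl, _, hLm⟩ := contract_expand hlch hlmem hlne
      obtain ⟨M, hMne, hMc, hMv, hMroot, hMl, hMq⟩ := contract_root_path hdag hQsub hroot
      have hLh' : L.head? = some rr0 := by rw [hLh, hhead]
      obtain ⟨hGc, hGh, hGl, _, hGm⟩ := chain_append hMc hLc hMl hLh'
      have hmemP : ∀ x ∈ M ++ L.tail, x ∈ P.verts := by
        intro x hx
        rcases hGm x hx with h | h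
        · exact hMv x h
        · rcases hLm x h with h2 | h2
          · exact hQsub (hlmem x h2)
          · exact (P.adj_mem _ _ h2.2.choose_spec).2
      have hrp : P.IsRootPath (M ++ L.tail) v' := by
        refine ⟨by simp [hMne], hGc, hmemP, ?_, by rw [hGl, hLl, hlast]⟩
        obtain ⟨rr, hrr, hrrroot⟩ := hMroot
        exact ⟨rr, by rw [hGh, hrr], hrrroot⟩
      obtain ⟨u'', hu''mem, horg''⟩ := hall (M ++ L.tail) hrp
      have hu''Q : u'' ∈ P.verts → u'' ∈ Q :=
        fun hv => Finset.mem_filter.mpr ⟨hv, horg'' ▸ huS⟩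
      rcases hGm u'' hu''mem with h | h
      · rcases hMq u'' h with rfl | hnq
        · refine ⟨u'', ?_, horg''⟩
          have : u'' ∈ l.head? := by rw [hhead]; rfl
          exact List.mem_of_mem_head? this
        · exact absurd (hu''Q (hMv u'' h)) hnq
      · rcases hLm u'' h with h2 | h2
        · exact ⟨u'', h2, horg''⟩
        · exact absurd (hu''Q ((P.adj_mem _ _ h2.2.choose_spec).2)) h2.1

/-! #### Restriction to the descendants of a root -/

/-- The descendants of `r` in `P`, as a finset. -/
def descSet (P : FinDigraph β) (r : β) : Finset β :=
  P.verts.filter fun x => P.Desc r x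

lemma induce_isDag {P : FinDigraph β} (hdag : P.IsDag) (S : Finset β) :
    (P.induce S).IsDag :=
  fun v hv => hdag v (Relation.TransGen.mono (fun _ _ h => h.1) v v hv)

lemma induce_desc_lift {P : FinDigraph β} {r v' u' : β} (hv : P.Desc r v')
    (h : Relation.ReflTransGen P.Adj v' u') :
    Relation.ReflTransGen (P.induce (descSet P r)).Adj v' u' := by
  induction h with
  | refl => exact Relation.ReflTransGen.refl
  | @tail b c hb hbc ih =>
    have hbd : P.Desc r b := Relation.ReflTransGen.trans hv hb
    have hbm : b ∈ descSet P r := Finset.mem_filter.mpr ⟨(P.adj_mem _ _ hbc).1, hbd⟩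
    have hcm : c ∈ descSet P r :=
      Finset.mem_filter.mpr ⟨(P.adj_mem _ _ hbc).2, hbd.tail hbc⟩
    exact ih.tail ⟨hbc, hbm, hcm⟩

lemma induce_desc_rootPath {P : FinDigraph β} (hdag : P.IsDag) {r : β} (hroot : P.IsRoot r)
    {l : List β} {x : β} (h : (P.induce (descSet P r)).IsRootPath l x) :
    P.IsRootPath l x := by
  obtain ⟨hne, hch, hmem, ⟨rr, hhd, hrr⟩, hlast⟩ := h
  refine ⟨hne, hch.imp fun a b hab => hab.1,
    fun y hy => Finset.mem_inter.mp (hmem y hy) |>.1, ⟨rr, hhd, ?_⟩, hlast⟩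
  have hrrd : P.Desc r rr :=
    (Finset.mem_filter.mp (Finset.mem_inter.mp hrr.1 |>.2)).2
  have hrrr : rr = r := by
    rcases hrrd.cases_tail with heq | ⟨y, hry, hyrr⟩
    · exact heq.symm ▸ rfl
    · exfalso
      have hyv : y ∈ P.verts := (P.adj_mem _ _ hyrr).1
      have hym : y ∈ descSet P r := Finset.mem_filter.mpr ⟨hyv, hry⟩
      exact hrr.2 y ⟨hyrr, hym, Finset.mem_inter.mp hrr.1 |>.2⟩
  exact hrrr ▸ hroot

lemma induceDesc_valid {D : FinDigraph α} {P : FinDigraph β} {org : β → α}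
    (h : IsValidDecomp D P org) {r : β} (hroot : P.IsRoot r)
    (hcover : ∀ v ∈ D.verts, ∃ v' ∈ descSet P r, org v' = v) :
    IsValidDecomp D (P.induce (descSet P r)) org := by
  obtain ⟨hdag, hmem, hsurj, hcov⟩ := h
  refine ⟨induce_isDag hdag _, ?_, ?_, ?_⟩
  · intro v' hv'
    exact hmem v' (Finset.mem_inter.mp hv' |>.1)
  · intro v hv
    obtain ⟨v', hv'd, horg⟩ := hcover v hv
    have hv'P : v' ∈ P.verts := (Finset.mem_filter.mp hv'd).1
    exact ⟨v', Finset.mem_inter.mpr ⟨hv'P, hv'd⟩, horg⟩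
  · intro v' hv' u hadj
    have hv'P : v' ∈ P.verts := Finset.mem_inter.mp hv' |>.1
    have hv'desc : P.Desc r v' := (Finset.mem_filter.mp (Finset.mem_inter.mp hv' |>.2)).2
    rcases hcov v' hv'P u hadj with ⟨u', hu'P, horg, hdesc⟩ | hall
    · refine Or.inl ⟨u', ?_, horg, induce_desc_lift hv'desc hdesc⟩
      exact Finset.mem_inter.mpr ⟨hu'P,
        Finset.mem_filter.mpr ⟨hu'P, Relation.ReflTransGen.trans hv'desc hdesc⟩⟩
    · exact Or.inr fun l hl => hall l (induce_desc_rootPath hdag hroot hl)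

/-- Neighbour cover forces the descendants of a root above a preimage of `s` to
cover everything reachable from `s`. -/
lemma desc_cover {D : FinDigraph α} {P : FinDigraph β} {org : β → α}
    (h : IsValidDecomp D P org) {r s' : β} (hroot : P.IsRoot r) (hrs : P.Desc r s')
    (hs'v : s' ∈ P.verts) :
    ∀ {z : α}, Relation.ReflTransGen D.Adj (org s') z → ∃ z' ∈ descSet P r, org z' = z := by
  intro z hz
  induction hz with
  | refl => exact ⟨s', Finset.mem_filter.mpr ⟨hs'v, hrs⟩, rfl⟩
  | @tail b c hb hbc ih =>
    obtain ⟨z', hz'd, horg⟩ := ih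
    obtain ⟨hz'v, hz'desc⟩ := Finset.mem_filter.mp hz'd
    rcases h.2.2.2 z' hz'v c (horg ▸ hbc) with ⟨u', hu', horg', hdesc⟩ | hall
    · exact ⟨u', Finset.mem_filter.mpr ⟨hu', Relation.ReflTransGen.trans hz'desc hdesc⟩, horg'⟩
    · obtain ⟨M, hMne, hMh, hMl, hMc, hMrtg, _, _, _⟩ := rtg_toList hz'desc
      have hrpath : P.IsRootPath M z' :=
        ⟨hMne, hMc, fun x hx => rtg_mem (hMrtg x hx) hroot.1, ⟨r, hMh, hroot⟩, hMl⟩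
      obtain ⟨u'', hu''M, horg''⟩ := hall M hrpath
      exact ⟨u'', Finset.mem_filter.mpr
        ⟨rtg_mem (hMrtg _ hu''M) hroot.1, hMrtg _ hu''M⟩, horg''⟩

/-- Depth strictly decreases when restricting to descendants of a root `r` and
contracting away the preimages of `org r`. -/
lemma contract_desc_depth {P : FinDigraph β} (hdag : P.IsDag) {r : β} (hrv : r ∈ P.verts)
    {S : Finset α} {org : β → α} (horgr : org r ∉ S) :
    ((P.induce (descSet P r)).contractTo
      ((P.induce (descSet P r)).verts.filter fun v' => org v' ∈ S)).depth < P.depth := by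
  set P₁ := P.induce (descSet P r) with hP₁
  set Q := P₁.verts.filter fun v' => org v' ∈ S with hQ
  have hdag₁ : P₁.IsDag := induce_isDag hdag _
  have hdagc : (P₁.contractTo Q).IsDag := contract_isDag hdag₁ Q
  have hmem := Nat.sSup_mem ⟨0, depthSet_zero (P₁.contractTo Q)⟩ (depthSet_bddAbove hdagc)
  obtain ⟨l, hc, hm, hlen⟩ := hmem
  rcases eq_or_ne l [] with rfl | hne
  · have h0 : (P₁.contractTo Q).depth = 0 := by
      have h' : (0 : ℕ) = sSup (depthSet (P₁.contractTo Q)) := by simpa using hlen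
      exact h'.symm
    rw [h0]
    exact lt_of_lt_of_le Nat.zero_lt_one (one_le_depth hdag hrv)
  · obtain ⟨L, hLc, hLh, _, hlenle, hLm⟩ := contract_expand hc hm hne
    have hrL : r ∉ L := by
      intro hr
      rcases hLm r hr with h | h
      · have : org r ∈ S := (Finset.mem_filter.mp (hm r h)).2
        exact horgr this
      · obtain ⟨y, hy⟩ := h.2
        have hydesc : P.Desc r y := (Finset.mem_filter.mp hy.2.1).2
        exact hdag r (Relation.TransGen.tail' hydesc hy.1)
    obtain ⟨c, t, rfl⟩ : ∃ c t, l = c :: t := by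
      cases l with
      | nil => exact absurd rfl hne
      | cons c t => exact ⟨c, t, rfl⟩
    have hcQ : c ∈ Q := hm c (by simp)
    have hcP₁ : c ∈ P₁.verts := (Finset.mem_filter.mp hcQ).1
    have hcdesc : P.Desc r c := (Finset.mem_filter.mp (Finset.mem_inter.mp hcP₁ |>.2)).2
    obtain ⟨M, hMne, hMh, hMl, hMc, hMrtg, _, _, hMlen2⟩ := rtg_toList hcdesc
    have hcr : r ≠ c := by
      rintro rfl
      exact horgr (Finset.mem_filter.mp hcQ).2
    have hM2 : 2 ≤ M.length := hMlen2.resolve_left hcr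
    have hLc' : L.Chain' P.Adj := hLc.imp fun a b hab => hab.1
    have hLh' : L.head? = some c := by rw [hLh]; rfl
    obtain ⟨hGc, _, _, hGlen, hGm⟩ := chain_append hMc hLc' hMl hLh'
    have hmemP : ∀ x ∈ M ++ L.tail, x ∈ P.verts := by
      intro x hx
      rcases hGm x hx with h | h
      · exact rtg_mem (hMrtg x h) hrv
      · rcases hLm x h with h2 | h2
        · exact Finset.mem_inter.mp (Finset.filter_subset _ _ (hm x h2)) |>.1
        · exact Finset.mem_inter.mp ((P₁.adj_mem _ _ h2.2.choose_spec).2) |>.1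
    have hdepth : (M ++ L.tail).length ≤ P.depth :=
      le_depth hdag ⟨M ++ L.tail, hGc, hmemP, rfl⟩
    have hlen' : (c :: t).length = (P₁.contractTo Q).depth := hlen
    have hll : (c :: t).length ≤ L.length := hlenle
    omega

/-- Main induction: a valid decomposition bounds `ddpAux`. -/
lemma ddpAux_le_depth : ∀ (n : ℕ) (D : FinDigraph α) (P : FinDigraph β) (org : β → α),
    D.verts.card ≤ n → D.verts.Nonempty → IsValidDecomp D P org →
    ddpAux n D ≤ P.depth := by
  intro n
  induction n with
  | zero =>
    intro D P org hcard hne _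
    exact absurd (Finset.card_pos.mpr hne) (by omega)
  | succ n ih =>
    intro D P org hcard hne hvalid
    have hdag : P.IsDag := hvalid.1
    have hmem := hvalid.2.1
    have hsurj := hvalid.2.2.1
    have hPne : ∃ v', v' ∈ P.verts := by
      obtain ⟨v, hv⟩ := hne
      obtain ⟨v', hv', _⟩ := hsurj v hv
      exact ⟨v', hv'⟩
    have hdepth1 : 1 ≤ P.depth := one_le_depth hdag hPne.choose_spec
    rw [ddpAux]
    split_ifs with h1 h2
    · exact hdepth1
    · -- single reachable fragment: V(D) = reach(s)
      obtain ⟨s, hsv, hreach⟩ := single_fragment h2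
      obtain ⟨s', hs'P, horgs'⟩ := hsurj s hsv
      obtain ⟨r, hroot, hdesc⟩ := exists_root_desc hdag (ancSet P s').card le_rfl hs'P
      have hrv : r ∈ P.verts := hroot.1
      have hvD : org r ∈ D.verts := hmem r hrv
      have hcover : ∀ z ∈ D.verts, ∃ z' ∈ descSet P r, org z' = z := by
        intro z hz
        have hzr : Relation.ReflTransGen D.Adj s z := (mem_reachSet.mp (hreach ▸ hz)).2
        exact desc_cover hvalid hroot hdesc hs'P (horgs' ▸ hzr)
      have hvalid₁ : IsValidDecomp D (P.induce (descSet P r)) org :=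
        induceDesc_valid hvalid hroot hcover
      have hvalid₂ := contract_valid hvalid₁ (D.verts.erase (org r))
      have hverts : (D.deleteVert (org r)).verts = D.verts.erase (org r) := by
        show D.verts ∩ D.verts.erase (org r) = D.verts.erase (org r)
        exact Finset.inter_eq_right.mpr (Finset.erase_subset _ _)
      have hcard2 : (D.deleteVert (org r)).verts.card ≤ n := by
        rw [hverts, Finset.card_erase_of_mem hvD]
        omega
      have hne2 : (D.deleteVert (org r)).verts.Nonempty := by
        rw [hverts]
        apply Finset.card_pos.mp
        rw [Finset.card_erase_of_mem hvD]
        omega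
      have hdd := ih (D.deleteVert (org r)) _ org hcard2 hne2 hvalid₂
      have hdep := contract_desc_depth (org := org) (S := D.verts.erase (org r)) hdag hrv
        (Finset.notMem_erase _ _)
      have hinf : (D.verts.inf' (Finset.card_pos.mp (by omega))
            fun v => ddpAux n (D.deleteVert v)) ≤ ddpAux n (D.deleteVert (org r)) :=
        Finset.inf'_le _ hvD
      omega
    · -- several fragments
      apply Finset.sup_le
      intro R hR
      have hsub : R ⊆ D.verts := Finset.mem_powerset.mp (Finset.mem_filter.mp hR).1
      obtain ⟨⟨s, hs, hRs⟩, _⟩ := (Finset.mem_filter.mp hR).2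
      have hRne : R ≠ D.verts := fragment_ne_verts h2 hR
      have hverts : (D.induce R).verts = R := Finset.inter_eq_right.mpr hsub
      have hcard' : (D.induce R).verts.card ≤ n := by
        rw [hverts]
        have := Finset.card_lt_card (ssubset_of_subset_of_ne hsub hRne)
        omega
      have hne' : (D.induce R).verts.Nonempty := by
        rw [hverts, hRs]
        exact ⟨s, self_mem_reachSet hs⟩
      have hvalid' := contract_valid hvalid R
      calc ddpAux n (D.induce R) ≤ _ := ih (D.induce R) _ org hcard' hne' hvalid'
        _ ≤ P.depth := contract_depth_le hdag (Finset.filter_subset _ _)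

end Aux

end FinDigraph

open FinDigraph in
/-- If a nonempty finite digraph `D` has a valid DAG-depth decomposition of depth `k`,
then `ddp D ≤ k`. -/
theorem ddp_le_depth_of_valid_decomp {α β : Type} (D : FinDigraph α)
    (hne : D.verts.Nonempty) (P : FinDigraph β) (org : β → α)
    (h : IsValidDecomp D P org) (k : ℕ) (hk : depth P = k) :
    ddp D ≤ k := by
  subst hk
  exact ddpAux_le_depth D.verts.card D P org le_rfl hne h
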